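/- Let X be a real-valued random variable whose law has a probability density function f supported on [0,1], and suppose f is symmetric around 1/2 (i.e., f(1/2 − ε) = f(1/2 + ε) for all ε ∈ [0, 1/2]). Then for every integer n ≥ 1, the n-th binary digit B_n(X) satisfies P[B_n(X) = 1] = 1/2 (equivalently, B_n(X) is Bernoulli(1/2)). -/

import Mathlib

open MeasureTheory ProbabilityTheory Set

/-- The `i`-th binary digit of `x ∈ [0,1]`: `B_i(x) = ⌊2^i x⌋ mod 2`. -/
noncomputable def binDigit (i : ℕ) (x : ℝ) : ℤ := ⌊(2:ℝ)^i * x⌋ % 2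

lemma binDigit_measurable (n : ℕ) : Measurable (binDigit n) := by
  have : binDigit n = (fun k : ℤ => k % 2) ∘ Int.floor ∘ (fun x : ℝ => (2:ℝ)^n * x) := rfl
  rw [this]
  exact measurable_from_top.comp (Int.measurable_floor.comp (measurable_const_mul _))

lemma floor_neg_of_fract_ne_zero {y : ℝ} (hy : Int.fract y ≠ 0) :
    ⌊-y⌋ = -⌊y⌋ - 1 := by
  have h1 : (⌊y⌋ : ℝ) ≤ y := Int.floor_le y
  have h2 : y < ⌊y⌋ + 1 := Int.lt_floor_add_one y
  have h3 : (⌊y⌋ : ℝ) ≠ y := by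
    intro h
    apply hy
    rw [Int.fract, ← h]
    simp
  refine Int.floor_eq_iff.mpr ⟨?_, ?_⟩
  · push_cast; linarith
  · push_cast; linarith [lt_of_le_of_ne h1 h3]

lemma binDigit_flip {n : ℕ} (hn : 1 ≤ n) {x : ℝ}
    (hx : Int.fract ((2:ℝ)^n * x) ≠ 0) :
    binDigit n (1 - x) = 1 - binDigit n x := by
  unfold binDigit
  have h1 : (2:ℝ)^n * (1 - x) = (((2:ℤ)^n : ℤ) : ℝ) + -((2:ℝ)^n * x) := by
    push_cast; ring
  have h2 : ⌊(2:ℝ)^n * (1 - x)⌋ = (2:ℤ)^n + ⌊-((2:ℝ)^n * x)⌋ := by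
    rw [h1, Int.floor_intCast_add]
  rw [h2, floor_neg_of_fract_ne_zero hx]
  have hm : ((2:ℤ)^n) % 2 = 0 := by
    have h := dvd_pow_self (2:ℤ) (by omega : n ≠ 0)
    omega
  omega

/-- If `X` has a density `f` supported on `[0,1]` that is symmetric around `1/2`,
then every binary digit `B_n(X)` (for `n ≥ 1`) is Bernoulli(1/2). -/
theorem binDigit_bernoulli_half_of_symmetric
    {Ω : Type*} [MeasureSpace Ω] [IsProbabilityMeasure (ℙ : Measure Ω)]
    (X : Ω → ℝ) (hX : Measurable X) (f : ℝ → ℝ)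
    (hf_nonneg : ∀ x, 0 ≤ f x)
    (hf_supp : ∀ x, x ∉ Set.Icc (0:ℝ) 1 → f x = 0)
    (hlaw : Measure.map X ℙ = volume.withDensity (fun x => ENNReal.ofReal (f x)))
    (hsym : ∀ ε ∈ Set.Icc (0:ℝ) (1/2), f (1/2 - ε) = f (1/2 + ε)) :
    ∀ n : ℕ, 1 ≤ n → ℙ {ω | binDigit n (X ω) = 1} = 1/2 := by
  intro n hn
  -- full-line symmetry of f
  have hfsym : ∀ x : ℝ, f (1 - x) = f x := by
    intro x
    by_cases hx : x ∈ Set.Icc (0:ℝ) 1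
    · rcases le_total x (1/2) with h | h
      · have := hsym (1/2 - x) ⟨by linarith, by linarith [hx.1]⟩
        rw [show (1:ℝ)/2 - (1/2 - x) = x by ring,
            show (1:ℝ)/2 + (1/2 - x) = 1 - x by ring] at this
        exact this.symm
      · have := hsym (x - 1/2) ⟨by linarith, by linarith [hx.2]⟩
        rw [show (1:ℝ)/2 - (x - 1/2) = 1 - x by ring,
            show (1:ℝ)/2 + (x - 1/2) = x by ring] at this
        exact this
    · have h1 : (1 - x) ∉ Set.Icc (0:ℝ) 1 := by
        simp only [Set.mem_Icc, not_and_or, not_le] at hx ⊢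
        rcases hx with h | h
        · right; linarith
        · left; linarith
      rw [hf_supp _ hx, hf_supp _ h1]
  set g : ℝ → ENNReal := fun x => ENNReal.ofReal (f x) with hg
  set μ : Measure ℝ := volume.withDensity g with hμ
  set S : Set ℝ := {x | binDigit n x = 1} with hSdef
  have hS : MeasurableSet S := binDigit_measurable n (measurableSet_singleton 1)
  set r : ℝ → ℝ := fun x => 1 - x with hr
  have hrS : MeasurableSet (r ⁻¹' S) := hS.preimage (measurable_const.sub measurable_id)
  -- r is measure preserving for volume and a measurable embedding
  have hrmp : MeasurePreserving r volume volume :=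
    Measure.measurePreserving_sub_left volume 1
  have hremb : MeasurableEmbedding r :=
    (MeasurableEquiv.subLeft (1:ℝ)).measurableEmbedding
  -- μ S = μ (r ⁻¹' S)
  have hcomp : μ S = μ (r ⁻¹' S) := by
    rw [hμ, withDensity_apply _ hS, withDensity_apply _ hrS,
      ← lintegral_indicator hS, ← lintegral_indicator hrS,
      ← hrmp.lintegral_comp_emb hremb (S.indicator g)]
    refine lintegral_congr fun x => ?_
    have hgr : g (r x) = g x := by simp only [hg, hr, hfsym x]
    by_cases hxS : r x ∈ S
    · rw [Set.indicator_of_mem hxS, Set.indicator_of_mem (by exact hxS), hgr]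
    · rw [Set.indicator_of_notMem hxS, Set.indicator_of_notMem (by exact hxS)]
  -- the dyadic null set
  set N : Set ℝ := {x | Int.fract ((2:ℝ)^n * x) = 0} with hN
  have hNvol : volume N = 0 := by
    have hsub : N ⊆ Set.range (fun k : ℤ => (k : ℝ) / 2^n) := by
      intro x hx
      have h2 : (2:ℝ)^n ≠ 0 := by positivity
      refine ⟨⌊(2:ℝ)^n * x⌋, ?_⟩
      have : ((⌊(2:ℝ)^n * x⌋ : ℝ)) = (2:ℝ)^n * x := by
        have := hx
        simp only [hN, Set.mem_setOf_eq, Int.fract] at this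
        linarith
      field_simp [this]
      exact this
    exact measure_mono_null hsub (Set.Countable.measure_zero (Set.countable_range _) _)
  have hNμ : μ N = 0 := withDensity_absolutelyContinuous volume g hNvol
  -- outside N, membership in r⁻¹'S is equivalent to membership in Sᶜ
  have hkey : ∀ x ∉ N, (x ∈ r ⁻¹' S ↔ x ∈ Sᶜ) := by
    intro x hx
    have hflip := binDigit_flip hn (by simpa [hN] using hx)
    have h01 : binDigit n x = 0 ∨ binDigit n x = 1 := Int.emod_two_eq _
    simp only [hSdef, Set.mem_preimage, Set.mem_compl_iff, Set.mem_setOf_eq, hr, hflip]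
    omega
  have hae : (r ⁻¹' S : Set ℝ) =ᶠ[ae μ] (Sᶜ : Set ℝ) := by
    rw [ae_eq_set]
    constructor <;> refine measure_mono_null (fun x hx => ?_) hNμ <;>
      by_contra hxN <;> have := hkey x hxN
    · exact hx.2 (this.mp hx.1)
    · exact hx.2 (this.mpr hx.1)
  have hScompl : μ S = μ Sᶜ := hcomp.trans (measure_congr hae)
  -- μ is a probability measure
  have hprob : IsProbabilityMeasure μ := hlaw ▸ Measure.isProbabilityMeasure_map hX.aemeasurable
  have hμuniv : μ Set.univ = 1 := measure_univ
  have hsum : μ S + μ Sᶜ = 1 := by rw [measure_add_measure_compl hS, hμuniv]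
  have h2 : μ S + μ S = 1 := by rw [← hScompl] at hsum; exact hsum
  have hfin : μ S ≠ ⊤ := measure_ne_top μ S
  have hhalf : μ S = 1/2 := by
    have ht : (μ S).toReal + (μ S).toReal = 1 := by
      rw [← ENNReal.toReal_add hfin hfin, h2]; simp
    have htr : (μ S).toReal = 1/2 := by linarith
    rw [← ENNReal.ofReal_toReal hfin, htr]
    rw [ENNReal.ofReal_div_of_pos (by norm_num), ENNReal.ofReal_one, ENNReal.ofReal_ofNat]
  rw [show {ω | binDigit n (X ω) = 1} = X ⁻¹' S from rfl,
    ← Measure.map_apply hX hS, hlaw, hhalf]
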